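/- Let p ≥ 3 be prime, let k be an integer with 2 ≤ k ≤ v-2 and p | k, and let T, T' be tournaments on the same vertex set V of size v. Let G be the boolean sum T +̇ T', the graph whose edges are the pairs {x,y} such that the arc direction between x and y in T differs from that in T'. If for every k-element subset K of V, the number of edges of G|_K is divisible by p, then T' = T or T' = T* (the dual tournament obtained by reversing all arcs). -/

import Mathlib

/-- A tournament on `V`: an orientation of the complete graph. -/
structure Tournament (V : Type*) where
  arc : V → V → Bool
  irrefl : ∀ x, arc x x = false
  total : ∀ x y, x ≠ y → arc x y = !arc y x

/-- The dual tournament, with all arcs reversed. -/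
def Tournament.dual {V : Type*} (T : Tournament V) : Tournament V :=
  ⟨fun x y => T.arc y x, T.irrefl, fun x y h => T.total y x (Ne.symm h)⟩

/-- The boolean sum of two tournaments: the graph whose edges are the pairs on which
the two tournaments disagree. -/
def boolSum {V : Type*} (T T' : Tournament V) : SimpleGraph V where
  Adj x y := x ≠ y ∧ T.arc x y ≠ T'.arc x y
  symm := ⟨by
    intro x y ⟨hne, hd⟩
    refine ⟨hne.symm, ?_⟩
    rw [T.total y x (Ne.symm hne), T'.total y x (Ne.symm hne)]
    simpa using hd⟩
  loopless := ⟨fun x h => h.1 rfl⟩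

instance {V : Type*} [DecidableEq V] (T T' : Tournament V) :
    DecidableRel (boolSum T T').Adj :=
  fun x y => inferInstanceAs (Decidable (x ≠ y ∧ T.arc x y ≠ T'.arc x y))

/-- Number of edges of the induced subgraph of `G` on a subset `K`. -/
def edgeCountOn {V : Type*} [Fintype V] [DecidableEq V] (G : SimpleGraph V)
    [DecidableRel G.Adj] (K : Finset V) : ℕ :=
  (G.edgeFinset.filter (· ∈ K.sym2)).card


set_option linter.unusedSectionVars false

section aux
variable {V : Type*} [Fintype V] [DecidableEq V] (G : SimpleGraph V) [DecidableRel G.Adj]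

def adjInd (a b : V) : ℤ := if G.Adj a b then 1 else 0

omit [Fintype V] [DecidableEq V] in
lemma adjInd_self (a : V) : adjInd G a a = 0 := by simp [adjInd]

omit [Fintype V] [DecidableEq V] in
lemma adjInd_symm (a b : V) : adjInd G a b = adjInd G b a := by
  simp [adjInd, SimpleGraph.adj_comm]

omit [Fintype V] [DecidableEq V] in
lemma adjInd_mem (a b : V) : adjInd G a b = 0 ∨ adjInd G a b = 1 := by
  unfold adjInd; split <;> simp

lemma count_eq (K : Finset V) :
    (∑ a ∈ K, ∑ b ∈ K, adjInd G a b) = 2 * (edgeCountOn G K : ℤ) := by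
  classical
  let H : SimpleGraph V :=
    { Adj := fun a b => G.Adj a b ∧ a ∈ K ∧ b ∈ K
      symm := ⟨fun a b h => ⟨h.1.symm, h.2.2, h.2.1⟩⟩
      loopless := ⟨fun a h => G.loopless.irrefl a h.1⟩ }
  letI : DecidableRel H.Adj := fun a b =>
    inferInstanceAs (Decidable (G.Adj a b ∧ a ∈ K ∧ b ∈ K))
  have hedge : H.edgeFinset = G.edgeFinset.filter (· ∈ K.sym2) := by
    ext e
    induction e using Sym2.ind with
    | _ a b =>
      simp [SimpleGraph.mem_edgeFinset, Finset.mem_filter, Finset.mk_mem_sym2_iff, H,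
        and_assoc]
  have hdeg : ∀ a : V, H.degree a = ∑ b : V, if H.Adj a b then 1 else 0 := by
    intro a
    rw [← SimpleGraph.card_neighborFinset_eq_degree, SimpleGraph.neighborFinset_eq_filter,
      Finset.card_filter]
  have hsum : ∑ a : V, H.degree a = 2 * edgeCountOn G K := by
    rw [SimpleGraph.sum_degrees_eq_twice_card_edges, hedge]; rfl
  have hsum2 : (∑ a : V, (H.degree a : ℤ)) = ∑ a ∈ K, ∑ b ∈ K, adjInd G a b := by
    have h1 : ∀ a : V, (H.degree a : ℤ) = ∑ b : V, if H.Adj a b then (1:ℤ) else 0 := by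
      intro a; rw [hdeg]; push_cast; simp
    rw [Finset.sum_congr rfl fun a _ => h1 a]
    rw [← Finset.sum_subset (Finset.subset_univ K) (by
      intro a _ ha
      apply Finset.sum_eq_zero
      intro b _
      simp only [H]
      rw [if_neg]; tauto)]
    refine Finset.sum_congr rfl fun a ha => ?_
    rw [← Finset.sum_subset (Finset.subset_univ K) (by
      intro b _ hb
      simp only [H]
      rw [if_neg]; tauto)]
    refine Finset.sum_congr rfl fun b hb => ?_
    simp only [H, adjInd]
    by_cases h : G.Adj a b <;> simp [h, ha, hb]
  rw [← hsum2]
  exact_mod_cast congrArg (Nat.cast : ℕ → ℤ) hsum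

lemma insert_sum (x : V) (K : Finset V) (hx : x ∉ K) :
    ∑ a ∈ insert x K, ∑ b ∈ insert x K, adjInd G a b
      = (∑ a ∈ K, ∑ b ∈ K, adjInd G a b) + 2 * ∑ z ∈ K, adjInd G x z := by
  rw [Finset.sum_insert hx, Finset.sum_insert hx, adjInd_self]
  have : ∀ a ∈ K, (∑ b ∈ insert x K, adjInd G a b)
      = adjInd G x a + ∑ b ∈ K, adjInd G a b := by
    intro a _
    rw [Finset.sum_insert hx, adjInd_symm]
  rw [Finset.sum_congr rfl this, Finset.sum_add_distrib]
  ring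

/-- The degree-difference divisibility. -/
lemma deg_diff (p k : ℕ) (hp : p.Prime) (hp3 : 3 ≤ p) (hk : 1 ≤ k)
    (h : ∀ K : Finset V, K.card = k → p ∣ edgeCountOn G K)
    (x y : V) (K : Finset V) (hK : K.card = k - 1) (hx : x ∉ K) (hy : y ∉ K) :
    (p : ℤ) ∣ (∑ z ∈ K, adjInd G x z) - (∑ z ∈ K, adjInd G y z) := by
  have hcard : ∀ a : V, a ∉ K → (insert a K).card = k := by
    intro a ha; rw [Finset.card_insert_of_notMem ha, hK]; omega
  have hdvd : ∀ a : V, a ∉ K → (p : ℤ) ∣ ∑ u ∈ insert a K, ∑ b ∈ insert a K, adjInd G u b := by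
    intro a ha
    rw [count_eq]
    exact Dvd.dvd.mul_left (Int.natCast_dvd_natCast.mpr (h _ (hcard a ha))) 2
  have h2 : (p : ℤ) ∣ 2 * ((∑ z ∈ K, adjInd G x z) - (∑ z ∈ K, adjInd G y z)) := by
    have := Int.dvd_sub (hdvd x hx) (hdvd y hy)
    rw [insert_sum G x K hx, insert_sum G y K hy] at this
    convert this using 1; ring
  have hpZ : Prime (p : ℤ) := Nat.prime_iff_prime_int.mp hp
  rcases (hpZ.dvd_mul.mp h2) with h' | h'
  · exfalso
    have := Int.le_of_dvd (by norm_num) h'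
    omega
  · exact h'

lemma smallDvd_zero (p : ℕ) (hp3 : 3 ≤ p) (e : ℤ) (h1 : -2 ≤ e) (h2 : e ≤ 2)
    (hd : (p : ℤ) ∣ e) : e = 0 := by
  apply Int.eq_zero_of_abs_lt_dvd hd
  have : (3:ℤ) ≤ p := by exact_mod_cast hp3
  rw [abs_lt]; omega

/-- Existence of a (k-1)-subset of s containing z. -/
lemma exists_K (k : ℕ) (hk : 2 ≤ k) (z : V) (s : Finset V) (hz : z ∈ s)
    (hc : k - 1 ≤ s.card) : ∃ K : Finset V, K ⊆ s ∧ z ∈ K ∧ K.card = k - 1 := by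
  obtain ⟨t, hts, htc⟩ := Finset.exists_subset_card_eq (s := s.erase z) (n := k - 2)
    (by rw [Finset.card_erase_of_mem hz]; omega)
  refine ⟨insert z t, ?_, Finset.mem_insert_self _ _, ?_⟩
  · exact Finset.insert_subset hz (hts.trans (Finset.erase_subset _ _))
  · rw [Finset.card_insert_of_notMem (fun hzt => (Finset.notMem_erase z s) (hts hzt)), htc]
    omega

end aux

section main
variable {V : Type*} [Fintype V] [DecidableEq V] (G : SimpleGraph V) [DecidableRel G.Adj]
variable (p k : ℕ)

lemma four_pt (hp : p.Prime) (hp3 : 3 ≤ p) (hk : 2 ≤ k) (hkv : k + 2 ≤ Fintype.card V)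
    (h : ∀ K : Finset V, K.card = k → p ∣ edgeCountOn G K)
    (x y z w : V) (hxy : x ≠ y) (hxz : x ≠ z) (hxw : x ≠ w) (hyz : y ≠ z) (hyw : y ≠ w)
    (hzw : z ≠ w) :
    adjInd G x z + adjInd G y w = adjInd G x w + adjInd G y z := by
  have hk1 : 1 ≤ k := by omega
  -- get K ⊆ univ \ {x, y, w} with z ∈ K, |K| = k-1
  have hzmem : z ∈ (Finset.univ \ {x, y, w} : Finset V) := by
    simp [hxz.symm, hyz.symm, hzw]
  have hcard3 : ({x, y, w} : Finset V).card = 3 := by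
    rw [Finset.card_insert_of_notMem (by simp [hxy, hxw]),
      Finset.card_insert_of_notMem (by simp [hyw]), Finset.card_singleton]
  have hcard : k - 1 ≤ (Finset.univ \ {x, y, w} : Finset V).card := by
    rw [Finset.card_sdiff_of_subset (Finset.subset_univ _), hcard3, Finset.card_univ]
    omega
  obtain ⟨K, hKs, hzK, hKc⟩ := exists_K k hk z _ hzmem hcard
  have hKno : ∀ a ∈ K, a ≠ x ∧ a ≠ y ∧ a ≠ w := by
    intro a ha
    have := hKs ha
    simp only [Finset.mem_sdiff, Finset.mem_insert, Finset.mem_singleton] at this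
    tauto
  have hxK : x ∉ K := fun hx => ((hKno x hx).1 rfl)
  have hyK : y ∉ K := fun hy => ((hKno y hy).2.1 rfl)
  have hwK : w ∉ K := fun hw => ((hKno w hw).2.2 rfl)
  set K' : Finset V := insert w (K.erase z) with hK'
  have hwKe : w ∉ K.erase z := fun hw => hwK (Finset.mem_of_mem_erase hw)
  have hK'c : K'.card = k - 1 := by
    rw [hK', Finset.card_insert_of_notMem hwKe, Finset.card_erase_of_mem hzK, hKc]
    omega
  have hxK' : x ∉ K' := by
    simp only [hK', Finset.mem_insert]
    push_neg
    exact ⟨hxw, fun hx => hxK (Finset.mem_of_mem_erase hx)⟩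
  have hyK' : y ∉ K' := by
    simp only [hK', Finset.mem_insert]
    push_neg
    exact ⟨hyw, fun hy => hyK (Finset.mem_of_mem_erase hy)⟩
  have d1 := deg_diff G p k hp hp3 hk1 h x y K hKc hxK hyK
  have d2 := deg_diff G p k hp hp3 hk1 h x y K' hK'c hxK' hyK'
  have herase : ∀ u : V, ∑ b ∈ K', adjInd G u b
      = (∑ b ∈ K, adjInd G u b) - adjInd G u z + adjInd G u w := by
    intro u
    rw [hK', Finset.sum_insert hwKe, Finset.sum_erase_eq_sub hzK]
    ring
  rw [herase, herase] at d2
  have d3 : (p : ℤ) ∣ (adjInd G x z + adjInd G y w) - (adjInd G x w + adjInd G y z) := by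
    have := Int.dvd_sub d1 d2
    convert this using 1
    ring
  have hb := adjInd_mem G x z
  have hb2 := adjInd_mem G y w
  have hb3 := adjInd_mem G x w
  have hb4 := adjInd_mem G y z
  have := smallDvd_zero p hp3 _ (by omega) (by omega) d3
  omega

lemma three_pt (hp : p.Prime) (hp3 : 3 ≤ p) (hk : 2 ≤ k) (hkv : k + 2 ≤ Fintype.card V)
    (hpk : p ∣ k)
    (h : ∀ K : Finset V, K.card = k → p ∣ edgeCountOn G K)
    (x y z : V) (hxy : x ≠ y) (hxz : x ≠ z) (hyz : y ≠ z) :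
    adjInd G x z = adjInd G y z := by
  have hk1 : 1 ≤ k := by omega
  have hzmem : z ∈ (Finset.univ \ {x, y} : Finset V) := by simp [hxz.symm, hyz.symm]
  have hcard : k - 1 ≤ (Finset.univ \ {x, y} : Finset V).card := by
    rw [Finset.card_sdiff_of_subset (Finset.subset_univ _), Finset.card_univ,
      Finset.card_insert_of_notMem (by simp [hxy]), Finset.card_singleton]
    omega
  obtain ⟨K, hKs, hzK, hKc⟩ := exists_K k hk z _ hzmem hcard
  have hKno : ∀ a ∈ K, a ≠ x ∧ a ≠ y := by
    intro a ha
    have := hKs ha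
    simp only [Finset.mem_sdiff, Finset.mem_insert, Finset.mem_singleton] at this
    tauto
  have hxK : x ∉ K := fun hx => ((hKno x hx).1 rfl)
  have hyK : y ∉ K := fun hy => ((hKno y hy).2 rfl)
  set c : ℤ := adjInd G x z - adjInd G y z with hc
  have hconst : ∀ w ∈ K, adjInd G x w - adjInd G y w = c := by
    intro w hw
    by_cases hwz : w = z
    · rw [hwz]
    · have hxw : x ≠ w := fun e => (hKno w hw).1 e.symm
      have hyw : y ≠ w := fun e => (hKno w hw).2 e.symm
      have := four_pt G p k hp hp3 hk hkv h x y z w hxy hxz hxw hyz hyw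
        (fun e => hwz e.symm)
      rw [hc]; omega
  have hsum : (∑ b ∈ K, adjInd G x b) - (∑ b ∈ K, adjInd G y b) = (k - 1 : ℕ) * c := by
    rw [← Finset.sum_sub_distrib, Finset.sum_congr rfl hconst, Finset.sum_const, hKc,
      nsmul_eq_mul]
  have d1 := deg_diff G p k hp hp3 hk1 h x y K hKc hxK hyK
  rw [hsum] at d1
  have hpZ : Prime (p : ℤ) := Nat.prime_iff_prime_int.mp hp
  rcases hpZ.dvd_mul.mp d1 with h' | h'
  · exfalso
    have hnk : p ∣ (k - 1 : ℕ) := by exact_mod_cast h'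
    have h1 : p ∣ 1 := by
      have := Nat.dvd_sub hpk hnk
      rwa [show k - (k - 1) = 1 by omega] at this
    have := Nat.le_of_dvd one_pos h1
    omega
  · have hb := adjInd_mem G x z
    have hb2 := adjInd_mem G y z
    have := smallDvd_zero p hp3 c (by omega) (by omega) h'
    omega

end main

section final
variable {V : Type*} [Fintype V] [DecidableEq V] (G : SimpleGraph V) [DecidableRel G.Adj]

lemma adj_iff_of_three_pt (p k : ℕ) (hp : p.Prime) (hp3 : 3 ≤ p) (hk : 2 ≤ k)
    (hkv : k + 2 ≤ Fintype.card V) (hpk : p ∣ k)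
    (h : ∀ K : Finset V, K.card = k → p ∣ edgeCountOn G K)
    (x y z : V) (hxy : x ≠ y) (hxz : x ≠ z) (hyz : y ≠ z) :
    (G.Adj x z ↔ G.Adj y z) := by
  have := three_pt G p k hp hp3 hk hkv hpk h x y z hxy hxz hyz
  unfold adjInd at this
  by_cases h1 : G.Adj x z <;> by_cases h2 : G.Adj y z <;> simp_all

lemma empty_or_complete (p k : ℕ) (hp : p.Prime) (hp3 : 3 ≤ p) (hk2 : 2 ≤ k)
    (hkv : k + 2 ≤ Fintype.card V) (hpk : p ∣ k)
    (h : ∀ K : Finset V, K.card = k → p ∣ edgeCountOn G K) :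
    (∀ x y : V, ¬ G.Adj x y) ∨ (∀ x y : V, x ≠ y → G.Adj x y) := by
  have hk3 : 3 ≤ k := le_trans hp3 (Nat.le_of_dvd (by omega) hpk)
  have hV5 : 5 ≤ Fintype.card V := by omega
  by_cases hE : ∃ a b : V, G.Adj a b
  · obtain ⟨a, b, hab⟩ := hE
    have hne : a ≠ b := G.ne_of_adj hab
    right
    intro x y hxy
    -- pick t outside {x, y, a, b}
    have hex : (Finset.univ \ {x, y, a, b} : Finset V).Nonempty := by
      rw [← Finset.card_pos, Finset.card_sdiff_of_subset (Finset.subset_univ _), Finset.card_univ]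
      have : ({x, y, a, b} : Finset V).card ≤ 4 := by
        apply le_trans (Finset.card_insert_le _ _)
        have : ({y, a, b} : Finset V).card ≤ 3 := by
          apply le_trans (Finset.card_insert_le _ _)
          have : ({a, b} : Finset V).card ≤ 2 := by
            apply le_trans (Finset.card_insert_le _ _); simp
          omega
        omega
      omega
    obtain ⟨t, ht⟩ := hex
    simp only [Finset.mem_sdiff, Finset.mem_univ, Finset.mem_insert, Finset.mem_singleton,
      true_and] at ht
    push_neg at ht
    obtain ⟨htx, hty, hta, htb⟩ := ht
    have L := adj_iff_of_three_pt G p k hp hp3 hk2 hkv hpk h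
    -- A x y = A t y
    have s1 : G.Adj x y ↔ G.Adj t y := L x t y (fun e => htx e.symm) hxy hty
    -- A t y = A t b
    have s2 : G.Adj t y ↔ G.Adj t b := by
      by_cases hyb : y = b
      · rw [hyb]
      · rw [G.adj_comm t y, G.adj_comm t b]
        exact L y b t hyb (fun e => hty e.symm) (fun e => htb e.symm)
    -- A t b = A a b
    have s3 : G.Adj t b ↔ G.Adj a b := L t a b (fun e => hta e) (fun e => htb e) hne
    exact s1.mpr (s2.mpr (s3.mpr hab))
  · left
    push_neg at hE
    exact hE

end final

lemma Tournament.ext' {V : Type*} {T T' : Tournament V} (h : T.arc = T'.arc) : T = T' := by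
  cases T; cases T'; cases h; rfl

/-- If `p ≥ 3` is prime, `p ∣ k`, `2 ≤ k ≤ v - 2`, and on every `k`-set the number of
edges of the boolean sum `T +̇ T'` is divisible by `p`, then `T' = T` or `T' = T*`. -/
theorem tournament_eq_or_dual_of_boolSum_mod_p {V : Type*} [Fintype V] [DecidableEq V]
    (T T' : Tournament V) (p k : ℕ) (hp : p.Prime) (hp3 : 3 ≤ p)
    (hk2 : 2 ≤ k) (hkv : k + 2 ≤ Fintype.card V) (hpk : p ∣ k)
    (h : ∀ K : Finset V, K.card = k → p ∣ edgeCountOn (boolSum T T') K) :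
    T' = T ∨ T' = T.dual := by
  rcases empty_or_complete (boolSum T T') p k hp hp3 hk2 hkv hpk h with hemp | hcom
  · left
    apply Tournament.ext'
    funext x y
    by_cases hxy : x = y
    · rw [hxy, T.irrefl, T'.irrefl]
    · have : ¬ (x ≠ y ∧ T.arc x y ≠ T'.arc x y) := hemp x y
      simp only [ne_eq] at this
      push_neg at this
      exact (this hxy).symm
  · right
    apply Tournament.ext'
    funext x y
    by_cases hxy : x = y
    · rw [hxy, T'.irrefl]
      show _ = T.arc y y
      rw [T.irrefl]
    · have := (show x ≠ y ∧ T.arc x y ≠ T'.arc x y from hcom x y hxy).2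
      show T'.arc x y = T.arc y x
      rw [T.total y x (Ne.symm hxy)] at *
      revert this
      cases T'.arc x y <;> cases T.arc x y <;> simp
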